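/- (Artin–Rees lemma via the diagram of initial exponents.) Let A₁,…,A_q ∈ ℝ⟦x₁,…,xₙ⟧ᵖ and let M ⊆ ℝ⟦x⟧ᵖ be the submodule they generate. Let (α_i,j_i), i = 1,…,t, denote the vertices of the diagram of initial exponents 𝒩(M), and set λ := max_i |α_i|. Then for all l ∈ ℕ: M ∩ 𝔪^{l+λ}·ℝ⟦x⟧ᵖ = 𝔪^l·(M ∩ 𝔪^{λ}·ℝ⟦x⟧ᵖ), where 𝔪 = (x₁,…,xₙ) is the maximal ideal of ℝ⟦x⟧. -/

import Mathlib

open Classical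

/-- Index set `ℕⁿ × {1,…,p}` for coefficients of elements of `A⟦x₁,…,xₙ⟧ᵖ`. -/
abbrev Idx (n p : ℕ) := (Fin n →₀ ℕ) × Fin p

/-- Total degree `|α|` of a multiindex. -/
def degF {n : ℕ} (α : Fin n →₀ ℕ) : ℕ := ∑ i, α i

/-- Lexicographic order on multiindices. -/
def lexLT {n : ℕ} (α β : Fin n →₀ ℕ) : Prop :=
  ∃ i : Fin n, (∀ j, j < i → α j = β j) ∧ α i < β i

/-- The total order on `ℕⁿ × {1,…,p}` comparing `(|α|, j, α)` lexicographically. -/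
def idxLT {n p : ℕ} (a b : Idx n p) : Prop :=
  degF a.1 < degF b.1 ∨
    (degF a.1 = degF b.1 ∧ ((a.2 : ℕ) < (b.2 : ℕ) ∨ (a.2 = b.2 ∧ lexLT a.1 b.1)))

def idxLE {n p : ℕ} (a b : Idx n p) : Prop := idxLT a b ∨ a = b

/-- Support of `F ∈ A⟦x⟧ᵖ`. -/
def suppV {n p : ℕ} {A : Type} [Semiring A] (F : Fin p → MvPowerSeries (Fin n) A) :
    Set (Idx n p) :=
  {d | MvPowerSeries.coeff d.1 (F d.2) ≠ 0}

/-- `d` is the initial exponent `exp F` of `F`. -/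
def IsExpOf {n p : ℕ} {A : Type} [Semiring A] (F : Fin p → MvPowerSeries (Fin n) A)
    (d : Idx n p) : Prop :=
  d ∈ suppV F ∧ ∀ d' ∈ suppV F, idxLE d d'

/-- `S + ℕⁿ`, for `S ⊆ ℕⁿ × {1,…,p}`. -/
def setShift {n p : ℕ} (S : Set (Idx n p)) : Set (Idx n p) :=
  {d | ∃ s ∈ S, ∃ β : Fin n →₀ ℕ, d = (s.1 + β, s.2)}

/-- The diagram of initial exponents `𝒩(M) = {exp F : F ∈ M ∖ {0}}` of a submodule `M`
of `A⟦x⟧ᵖ`. -/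
def diagramOf {n p : ℕ} {A : Type} [CommRing A]
    (M : Submodule (MvPowerSeries (Fin n) A) (Fin p → MvPowerSeries (Fin n) A)) :
    Set (Idx n p) :=
  {d | ∃ F ∈ M, F ≠ 0 ∧ IsExpOf F d}

/-- `d` is a vertex of the diagram `𝒩`: `(𝒩 ∖ {d}) + ℕⁿ ≠ 𝒩`. -/
def IsVertex {n p : ℕ} (𝒩 : Set (Idx n p)) (d : Idx n p) : Prop :=
  setShift (𝒩 \ {d}) ≠ 𝒩

/-- `(α_i, j_i) + ℕⁿ`. -/
def DeltaFull {n p q : ℕ} (e : Fin q → Idx n p) (i : Fin q) : Set (Idx n p) :=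
  {d | d.2 = (e i).2 ∧ ∃ β : Fin n →₀ ℕ, d.1 = (e i).1 + β}

/-- The sets `Δ_i` of Hironaka's division: `Δ_i = ((α_i,j_i) + ℕⁿ) ∖ (Δ_1 ∪ ⋯ ∪ Δ_{i−1})`. -/
def Delta {n p q : ℕ} (e : Fin q → Idx n p) (i : Fin q) : Set (Idx n p) :=
  DeltaFull e i \ ⋃ (k : Fin q) (hk : k < i), Delta e k
termination_by i.val
decreasing_by exact hk

/-- The complementary region `Δ = ℕⁿ×{1,…,p} ∖ (Δ_1 ∪ ⋯ ∪ Δ_q)`. -/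
def DeltaC {n p q : ℕ} (e : Fin q → Idx n p) : Set (Idx n p) :=
  (⋃ i : Fin q, Delta e i)ᶜ

-- sanity checks for instances used later

section OrderLemmas
variable {n p : ℕ}

lemma degF_add (α β : Fin n →₀ ℕ) : degF (α + β) = degF α + degF β := by
  simp [degF, Finsupp.add_apply, Finset.sum_add_distrib]

lemma degF_single (i : Fin n) : degF (Finsupp.single i 1) = 1 := by
  simp [degF, Finsupp.single_apply]

lemma degF_eq_zero {α : Fin n →₀ ℕ} (h : degF α = 0) : α = 0 := by
  ext i
  have := Finset.sum_eq_zero_iff.mp h i (Finset.mem_univ i)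
  simpa using this

lemma lexLT_irrefl (α : Fin n →₀ ℕ) : ¬ lexLT α α := by
  rintro ⟨i, -, h⟩; exact lt_irrefl _ h

lemma lexLT_trans {α β γ : Fin n →₀ ℕ} (h1 : lexLT α β) (h2 : lexLT β γ) : lexLT α γ := by
  obtain ⟨i, hi, hlt⟩ := h1
  obtain ⟨i', hi', hlt'⟩ := h2
  rcases lt_trichotomy i i' with h | h | h
  · exact ⟨i, fun j hj => (hi j hj).trans (hi' j (hj.trans h)), hlt.trans_le (hi' i h).le⟩
  · subst h; exact ⟨i, fun j hj => (hi j hj).trans (hi' j hj), hlt.trans hlt'⟩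
  · exact ⟨i', fun j hj => (hi j (hj.trans h)).trans (hi' j hj), (hi i' h).le.trans_lt hlt'⟩

lemma lexLT_total {α β : Fin n →₀ ℕ} (h : α ≠ β) : lexLT α β ∨ lexLT β α := by
  have hne : ∃ i, α i ≠ β i := by
    by_contra hc
    push_neg at hc
    exact h (Finsupp.ext hc)
  set S : Finset (Fin n) := Finset.univ.filter (fun i => α i ≠ β i) with hS
  have hSne : S.Nonempty := by
    obtain ⟨i, hi⟩ := hne
    exact ⟨i, by simp [hS, hi]⟩
  set i0 := S.min' hSne with hi0
  have hmem : α i0 ≠ β i0 := by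
    have := S.min'_mem hSne
    simpa [hS] using this
  have hbelow : ∀ j, j < i0 → α j = β j := by
    intro j hj
    by_contra hc
    have : j ∈ S := by simp [hS, hc]
    exact absurd (S.min'_le j this) (not_le.mpr hj)
  rcases lt_or_gt_of_ne hmem with h' | h'
  · exact Or.inl ⟨i0, hbelow, h'⟩
  · exact Or.inr ⟨i0, fun j hj => (hbelow j hj).symm, h'⟩

lemma lexLT_add_right {α β : Fin n →₀ ℕ} (γ : Fin n →₀ ℕ) (h : lexLT α β) :
    lexLT (α + γ) (β + γ) := by
  obtain ⟨i, hi, hlt⟩ := h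
  exact ⟨i, fun j hj => by simp [Finsupp.add_apply, hi j hj], by
    simp only [Finsupp.add_apply]; omega⟩

lemma idxLT_irrefl (a : Idx n p) : ¬ idxLT a a := by
  rintro (h | ⟨-, h | ⟨-, h⟩⟩)
  · exact lt_irrefl _ h
  · exact lt_irrefl _ h
  · exact lexLT_irrefl _ h

lemma idxLT_trans {a b c : Idx n p} (h1 : idxLT a b) (h2 : idxLT b c) : idxLT a c := by
  rcases h1 with h1 | ⟨e1, h1⟩
  · rcases h2 with h2 | ⟨e2, h2⟩
    · exact Or.inl (h1.trans h2)
    · exact Or.inl (e2 ▸ h1)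
  · rcases h2 with h2 | ⟨e2, h2⟩
    · exact Or.inl (e1 ▸ h2)
    · refine Or.inr ⟨e1.trans e2, ?_⟩
      rcases h1 with h1 | ⟨j1, h1⟩
      · rcases h2 with h2 | ⟨j2, h2⟩
        · exact Or.inl (h1.trans h2)
        · exact Or.inl (j2 ▸ h1)
      · rcases h2 with h2 | ⟨j2, h2⟩
        · exact Or.inl (j1 ▸ h2)
        · exact Or.inr ⟨j1.trans j2, lexLT_trans h1 h2⟩

lemma idxLT_total {a b : Idx n p} (h : a ≠ b) : idxLT a b ∨ idxLT b a := by
  rcases lt_trichotomy (degF a.1) (degF b.1) with hd | hd | hd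
  · exact Or.inl (Or.inl hd)
  · rcases lt_trichotomy ((a.2 : ℕ)) ((b.2 : ℕ)) with hj | hj | hj
    · exact Or.inl (Or.inr ⟨hd, Or.inl hj⟩)
    · have hj2 : a.2 = b.2 := Fin.ext hj
      have hα : a.1 ≠ b.1 := by
        intro hc; exact h (Prod.ext hc hj2)
      rcases lexLT_total hα with hl | hl
      · exact Or.inl (Or.inr ⟨hd, Or.inr ⟨hj2, hl⟩⟩)
      · exact Or.inr (Or.inr ⟨hd.symm, Or.inr ⟨hj2.symm, hl⟩⟩)
    · exact Or.inr (Or.inr ⟨hd.symm, Or.inl hj⟩)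
  · exact Or.inr (Or.inl hd)

lemma idxLE_refl (a : Idx n p) : idxLE a a := Or.inr rfl

lemma idxLE_trans {a b c : Idx n p} (h1 : idxLE a b) (h2 : idxLE b c) : idxLE a c := by
  rcases h1 with h1 | rfl
  · rcases h2 with h2 | rfl
    · exact Or.inl (idxLT_trans h1 h2)
    · exact Or.inl h1
  · exact h2

lemma idxLT_of_idxLE_ne {a b : Idx n p} (h : idxLE a b) (hne : a ≠ b) : idxLT a b :=
  h.resolve_right hne

lemma idxLE_of_not_idxLT {a b : Idx n p} (h : ¬ idxLT a b) : idxLE b a := by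
  by_cases he : a = b
  · exact Or.inr he.symm
  · exact Or.inl ((idxLT_total he).resolve_left h)

lemma not_idxLE_of_idxLT {a b : Idx n p} (h : idxLT a b) : ¬ idxLE b a := by
  rintro (h' | rfl)
  · exact idxLT_irrefl a (idxLT_trans h h')
  · exact idxLT_irrefl _ h

lemma idxLE_degF {a b : Idx n p} (h : idxLE a b) : degF a.1 ≤ degF b.1 := by
  rcases h with (h | ⟨h, -⟩) | rfl
  · exact h.le
  · exact h.le
  · exact le_rfl

lemma idxLT_add {α α' : Fin n →₀ ℕ} {j j' : Fin p} (β : Fin n →₀ ℕ)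
    (h : idxLT (α, j) (α', j')) : idxLT (α + β, j) (α' + β, j') := by
  rcases h with h | ⟨hd, h⟩
  · exact Or.inl (by simpa [degF_add] using Nat.add_lt_add_right h (degF β))
  · refine Or.inr ⟨by simp [degF_add, hd], ?_⟩
    rcases h with h | ⟨hj, h⟩
    · exact Or.inl h
    · exact Or.inr ⟨hj, lexLT_add_right β h⟩

lemma idxLE_add {α α' : Fin n →₀ ℕ} {j j' : Fin p} (β : Fin n →₀ ℕ)
    (h : idxLE (α, j) (α', j')) : idxLE (α + β, j) (α' + β, j') := by
  rcases h with h | h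
  · exact Or.inl (idxLT_add β h)
  · refine Or.inr ?_
    have h1 : α = α' := congrArg Prod.fst h
    have h2 : j = j' := congrArg Prod.snd h
    rw [h1, h2]

lemma finite_degF_le (D : ℕ) : {α : Fin n →₀ ℕ | degF α ≤ D}.Finite := by
  have : {α : Fin n →₀ ℕ | degF α ≤ D} ⊆ Set.Iic (Finsupp.equivFunOnFinite.symm (fun _ => D)) := by
    intro α hα
    intro i
    have h1 : α i ≤ degF α := Finset.single_le_sum (f := fun j => α j) (fun _ _ => Nat.zero_le _) (Finset.mem_univ i)
    exact le_trans (h1.trans hα) (le_of_eq rfl)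
  exact (Set.finite_Iic _).subset this

lemma finite_idxLE (d : Idx n p) : {x : Idx n p | idxLE x d}.Finite := by
  have : {x : Idx n p | idxLE x d} ⊆ {α : Fin n →₀ ℕ | degF α ≤ degF d.1} ×ˢ (Set.univ : Set (Fin p)) := by
    rintro x hx
    exact ⟨idxLE_degF hx, trivial⟩
  exact ((finite_degF_le (degF d.1)).prod (Set.finite_univ)).subset this

lemma exists_min_finset (S : Finset (Idx n p)) (hne : S.Nonempty) :
    ∃ m ∈ S, ∀ x ∈ S, idxLE m x := by
  classical
  revert hne
  induction S using Finset.induction_on with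
  | empty => intro hne; exact absurd hne (by simp)
  | @insert a S ha ih =>
    intro _
    by_cases hS : S.Nonempty
    · obtain ⟨m, hm, hmin⟩ := ih hS
      by_cases hma : idxLE m a
      · exact ⟨m, Finset.mem_insert_of_mem hm, by
          intro x hx
          rcases Finset.mem_insert.mp hx with rfl | hx
          · exact hma
          · exact hmin x hx⟩
      · refine ⟨a, Finset.mem_insert_self a S, ?_⟩
        intro x hx
        rcases Finset.mem_insert.mp hx with rfl | hx
        · exact idxLE_refl x
        · exact idxLE_trans (Or.inl ((idxLE_of_not_idxLT (fun hlt => hma (Or.inl hlt))).resolve_right (fun he => hma (Or.inr he.symm)) )) (hmin x hx)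
    · refine ⟨a, Finset.mem_insert_self a S, ?_⟩
      intro x hx
      rcases Finset.mem_insert.mp hx with rfl | hx
      · exact idxLE_refl x
      · exact absurd ⟨x, hx⟩ hS

lemma exists_min_idx {S : Set (Idx n p)} (hfin : S.Finite) (hne : S.Nonempty) :
    ∃ m ∈ S, ∀ x ∈ S, idxLE m x := by
  obtain ⟨m, hm, hmin⟩ := exists_min_finset hfin.toFinset (by
    simpa [Set.Finite.toFinset] using hne)
  exact ⟨m, (Set.Finite.mem_toFinset hfin).mp hm, fun x hx => hmin x ((Set.Finite.mem_toFinset hfin).mpr hx)⟩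

end OrderLemmas
section Ideal
open MvPowerSeries
variable {n : ℕ}

/-- The maximal ideal `(x₁,…,xₙ)`. -/
noncomputable abbrev mIdl (n : ℕ) : Ideal (MvPowerSeries (Fin n) ℝ) :=
  Ideal.span (Set.range (MvPowerSeries.X : Fin n → MvPowerSeries (Fin n) ℝ))

/-- The ideal of power series of order `≥ m`. -/
noncomputable def VIdl (n m : ℕ) : Ideal (MvPowerSeries (Fin n) ℝ) where
  carrier := {f | ∀ d : Fin n →₀ ℕ, degF d < m → coeff d f = 0}
  add_mem' := by
    intro a b ha hb d hd
    simp [ha d hd, hb d hd]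
  zero_mem' := by intro d hd; simp
  smul_mem' := by
    intro c f hf d hd
    rw [smul_eq_mul, coeff_mul]
    refine Finset.sum_eq_zero ?_
    rintro ⟨u, v⟩ huv
    have huv' : u + v = d := Finset.HasAntidiagonal.mem_antidiagonal.mp huv
    have : degF v ≤ degF d := by
      rw [← huv', degF_add]; omega
    rw [hf v (lt_of_le_of_lt this hd), mul_zero]

lemma mem_VIdl {m : ℕ} {f : MvPowerSeries (Fin n) ℝ} :
    f ∈ VIdl n m ↔ ∀ d : Fin n →₀ ℕ, degF d < m → coeff d f = 0 := Iff.rfl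

lemma VIdl_mul_le (a b : ℕ) : VIdl n a * VIdl n b ≤ VIdl n (a + b) := by
  rw [Ideal.mul_le]
  intro f hf g hg
  intro d hd
  rw [coeff_mul]
  refine Finset.sum_eq_zero ?_
  rintro ⟨u, v⟩ huv
  have huv' : u + v = d := Finset.HasAntidiagonal.mem_antidiagonal.mp huv
  have hdeg : degF u + degF v < a + b := by rw [← degF_add, huv']; exact hd
  by_cases hu : degF u < a
  · rw [hf u hu, zero_mul]
  · have : degF v < b := by omega
    rw [hg v this, mul_zero]

lemma mIdl_le_VIdl_one : mIdl n ≤ VIdl n 1 := by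
  rw [Ideal.span_le]
  rintro _ ⟨i, rfl⟩
  intro d hd
  rw [MvPowerSeries.coeff_X]
  have : d ≠ Finsupp.single i 1 := by
    intro h; rw [h, degF_single] at hd; omega
  simp [this]

lemma mIdl_pow_le (m : ℕ) : mIdl n ^ m ≤ VIdl n m := by
  induction m with
  | zero => intro f _ d hd; omega
  | succ m ih =>
    calc mIdl n ^ (m+1) = mIdl n ^ m * mIdl n := pow_succ _ _
    _ ≤ VIdl n m * VIdl n 1 := Ideal.mul_mono ih mIdl_le_VIdl_one
    _ ≤ VIdl n (m + 1) := VIdl_mul_le m 1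

lemma VIdl_le_pow (m : ℕ) : VIdl n m ≤ mIdl n ^ m := by
  induction m with
  | zero => intro f _; simp
  | succ m ih =>
    intro f hf
    classical
    -- write f = ∑ i, X i * g i
    set g : Fin n → MvPowerSeries (Fin n) ℝ := fun i =>
      fun β => if (∀ j, j < i → β j = 0) then coeff (β + Finsupp.single i 1) f else 0
      with hg
    have hgco : ∀ i β, coeff β (g i) =
        if (∀ j, j < i → β j = 0) then coeff (β + Finsupp.single i 1) f else 0 := by
      intro i β; rfl
    have hgV : ∀ i, g i ∈ VIdl n m := by
      intro i β hβ
      rw [hgco]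
      split
      · refine hf _ ?_
        rw [degF_add, degF_single]; omega
      · rfl
    have hfeq : f = ∑ i, X i * g i := by
      ext d
      rw [map_sum]
      by_cases hd0 : d = 0
      · subst hd0
        have h0 : coeff (0 : Fin n →₀ ℕ) f = 0 := hf 0 (by simp [degF])
        rw [h0]
        symm
        refine Finset.sum_eq_zero ?_
        intro i _
        rw [show (X i : MvPowerSeries (Fin n) ℝ) = monomial (Finsupp.single i 1) 1 from rfl,
          coeff_monomial_mul]
        have : ¬ Finsupp.single i 1 ≤ (0 : Fin n →₀ ℕ) := by
          rw [Finsupp.single_le_iff]; simp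
        simp [this]
      · -- least index with d i ≠ 0
        have hsupp : d.support.Nonempty := by
          rw [Finsupp.support_nonempty_iff]; exact hd0
        set i0 := d.support.min' hsupp with hi0
        have hi0mem : d i0 ≠ 0 := Finsupp.mem_support_iff.mp (d.support.min'_mem hsupp)
        have hi0min : ∀ j, j < i0 → d j = 0 := by
          intro j hj
          by_contra hc
          exact absurd (d.support.min'_le j (Finsupp.mem_support_iff.mpr hc)) (not_le.mpr hj)
        symm
        rw [Finset.sum_eq_single i0]
        · rw [show (X i0 : MvPowerSeries (Fin n) ℝ) = monomial (Finsupp.single i0 1) 1 from rfl,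
            coeff_monomial_mul]
          have hle : Finsupp.single i0 1 ≤ d := Finsupp.single_le_iff.mpr (by omega)
          rw [if_pos hle, one_mul, hgco]
          rw [if_pos, tsub_add_cancel_of_le hle]
          intro j hj
          simp [Finsupp.tsub_apply, hi0min j hj]
        · intro i _ hii0
          rw [show (X i : MvPowerSeries (Fin n) ℝ) = monomial (Finsupp.single i 1) 1 from rfl,
            coeff_monomial_mul]
          by_cases hle : Finsupp.single i 1 ≤ d
          · rw [if_pos hle, one_mul, hgco, if_neg]
            intro hall
            have hii : i0 < i := by
              rcases lt_or_gt_of_ne hii0 with h | h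
              · exact absurd (hi0min i h) (by
                  have := Finsupp.single_le_iff.mp hle
                  omega)
              · exact h
            have := hall i0 hii
            rw [Finsupp.tsub_apply] at this
            have hsi : (Finsupp.single i 1 : Fin n →₀ ℕ) i0 = 0 := by
              rw [Finsupp.single_apply, if_neg hii0]
            omega
          · rw [if_neg hle]
        · intro h; exact absurd (Finset.mem_univ i0) h
    rw [hfeq]
    refine Submodule.sum_mem _ ?_
    intro i _
    have hX : (X i : MvPowerSeries (Fin n) ℝ) ∈ mIdl n := Ideal.subset_span ⟨i, rfl⟩
    have : mIdl n * mIdl n ^ m ≤ mIdl n ^ (m + 1) := by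
      rw [pow_succ]
      rw [mul_comm]
    exact this (Ideal.mul_mem_mul hX (ih (hgV i)))

lemma mem_mIdl_pow_iff {m : ℕ} {f : MvPowerSeries (Fin n) ℝ} :
    f ∈ mIdl n ^ m ↔ ∀ d : Fin n →₀ ℕ, degF d < m → coeff d f = 0 :=
  ⟨fun h => mIdl_pow_le m h, fun h => VIdl_le_pow m h⟩

end Ideal
section Mod
open MvPowerSeries
variable {n p : ℕ}

abbrev ModV (n p : ℕ) := Fin p → MvPowerSeries (Fin n) ℝ

lemma mem_smul_top_iff (I : Ideal (MvPowerSeries (Fin n) ℝ)) (F : ModV n p) :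
    F ∈ I • (⊤ : Submodule (MvPowerSeries (Fin n) ℝ) (ModV n p)) ↔ ∀ j, F j ∈ I := by
  constructor
  · intro h
    have hle : I • (⊤ : Submodule (MvPowerSeries (Fin n) ℝ) (ModV n p)) ≤
        Submodule.pi Set.univ (fun _ : Fin p => I) := by
      refine Submodule.smul_le.mpr ?_
      intro r hr m _
      intro j _
      exact Ideal.mul_mem_right _ _ hr
    exact fun j => hle h j (Set.mem_univ j)
  · intro h
    have : F = ∑ j, (F j) • (Pi.single j 1 : ModV n p) := by
      rw [← Finset.univ_sum_single F]
      refine Finset.sum_congr rfl ?_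
      intro j _
      ext k
      by_cases hk : k = j
      · subst hk; simp
      · simp [Pi.single_apply, hk]
    rw [this]
    refine Submodule.sum_mem _ ?_
    intro j _
    exact Submodule.smul_mem_smul (h j) Submodule.mem_top

lemma exists_isExpOf {F : ModV n p} (hF : F ≠ 0) : ∃ d, IsExpOf F d := by
  have hne : (suppV F).Nonempty := by
    by_contra hc
    rw [Set.not_nonempty_iff_eq_empty] at hc
    apply hF
    funext j
    ext α
    have : (α, j) ∉ suppV F := by rw [hc]; exact Set.notMem_empty _
    simpa [suppV] using this
  obtain ⟨d0, hd0⟩ := hne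
  set T := {x ∈ suppV F | idxLE x d0} with hT
  have hTfin : T.Finite := (finite_idxLE d0).subset (fun x hx => hx.2)
  have hTne : T.Nonempty := ⟨d0, hd0, idxLE_refl d0⟩
  obtain ⟨m, hm, hmin⟩ := exists_min_idx hTfin hTne
  refine ⟨m, hm.1, ?_⟩
  intro x hx
  by_cases hxd : idxLE x d0
  · exact hmin x ⟨hx, hxd⟩
  · exact idxLE_trans (hmin d0 ⟨hd0, idxLE_refl d0⟩)
      (Or.inl ((idxLT_total (fun he => hxd (Or.inr he))).resolve_left
        (fun hlt => hxd (Or.inl hlt))))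

/-- coefficients of `monomial β c • G` -/
lemma coeff_monomial_smul (β : Fin n →₀ ℕ) (c : ℝ) (G : ModV n p) (x : Idx n p) :
    coeff x.1 ((monomial β c • G) x.2) =
      if β ≤ x.1 then c * coeff (x.1 - β) (G x.2) else 0 := by
  rw [Pi.smul_apply, smul_eq_mul, coeff_monomial_mul]

lemma supp_monomial_smul {β : Fin n →₀ ℕ} {c : ℝ} {G : ModV n p} {d : Idx n p}
    (hG : IsExpOf G d) {x : Idx n p} (hx : x ∈ suppV (monomial β c • G)) :
    idxLE (d.1 + β, d.2) x := by
  have h := hx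
  rw [suppV, Set.mem_setOf_eq, coeff_monomial_smul] at h
  by_cases hle : β ≤ x.1
  · rw [if_pos hle] at h
    have hco : coeff (x.1 - β) (G x.2) ≠ 0 := by
      intro hc; rw [hc, mul_zero] at h; exact h rfl
    have hsup : ((x.1 - β, x.2) : Idx n p) ∈ suppV G := hco
    have := idxLE_add β (hG.2 _ hsup)
    rwa [tsub_add_cancel_of_le hle] at this
  · rw [if_neg hle] at h; exact absurd rfl h

variable {M : Submodule (MvPowerSeries (Fin n) ℝ) (ModV n p)}

lemma diagram_shift {d : Idx n p} (hd : d ∈ diagramOf M) (β : Fin n →₀ ℕ) :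
    ((d.1 + β, d.2) : Idx n p) ∈ diagramOf M := by
  obtain ⟨F, hFM, hF0, hFe⟩ := hd
  refine ⟨monomial β 1 • F, Submodule.smul_mem M _ hFM, ?_, ?_, ?_⟩
  · intro hc
    have : coeff (d.1 + β) ((monomial β (1:ℝ) • F) d.2) = 0 := by rw [hc]; simp
    rw [coeff_monomial_smul (x := (d.1 + β, d.2))] at this
    have hle : β ≤ d.1 + β := le_add_self
    rw [if_pos hle, one_mul, add_tsub_cancel_right] at this
    exact hFe.1 this
  · show ((d.1 + β, d.2) : Idx n p) ∈ suppV _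
    rw [suppV, Set.mem_setOf_eq, coeff_monomial_smul]
    have hle : β ≤ d.1 + β := le_add_self
    rw [if_pos hle, add_tsub_cancel_right, one_mul]
    exact hFe.1
  · intro x hx
    exact supp_monomial_smul hFe hx

lemma diagram_setShift : setShift (diagramOf M) = diagramOf M := by
  ext d
  constructor
  · rintro ⟨s, hs, β, rfl⟩
    exact diagram_shift hs β
  · intro hd
    exact ⟨d, hd, 0, by simp⟩

lemma vertex_mem_diagram {d : Idx n p} (hd : IsVertex (diagramOf M) d) : d ∈ diagramOf M := by
  by_contra hc
  apply hd
  have : diagramOf M \ {d} = diagramOf M := by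
    ext x; simp only [Set.mem_diff, Set.mem_singleton_iff]
    exact ⟨fun h => h.1, fun h => ⟨h, fun he => hc (he ▸ h)⟩⟩
  rw [this, diagram_setShift]

lemma mem_shift_vertex {t : ℕ} {e : Fin t → Idx n p}
    (hevert : ∀ d : Idx n p, IsVertex (diagramOf M) d ↔ ∃ i, e i = d)
    {d : Idx n p} (hd : d ∈ diagramOf M) :
    ∃ (i : Fin t) (β : Fin n →₀ ℕ), d = ((e i).1 + β, (e i).2) := by
  classical
  set S := {x : Idx n p | x ∈ diagramOf M ∧ x.2 = d.2 ∧ x.1 ≤ d.1} with hS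
  have hSfin : S.Finite := by
    have : S ⊆ (Set.Iic d.1) ×ˢ (Set.univ : Set (Fin p)) := by
      rintro x hx
      exact ⟨hx.2.2, trivial⟩
    exact ((Set.finite_Iic d.1).prod Set.finite_univ).subset this
  have hSne : S.Nonempty := ⟨d, hd, rfl, le_rfl⟩
  obtain ⟨m, hm, hmin⟩ : ∃ m ∈ hSfin.toFinset, ∀ x ∈ hSfin.toFinset, ¬ x < m := by
    obtain ⟨m, hm, hmin⟩ := hSfin.exists_minimal hSne
    exact ⟨m, hSfin.mem_toFinset.mpr hm, fun x hx hlt =>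
      lt_irrefl _ (hlt.trans_le (hmin (hSfin.mem_toFinset.mp hx) hlt.le))⟩
  rw [Set.Finite.mem_toFinset] at hm
  have hmvert : IsVertex (diagramOf M) m := by
    intro hc
    have hmem : m ∈ setShift (diagramOf M \ {m}) := by rw [hc]; exact hm.1
    obtain ⟨s, hs, β, hsβ⟩ := hmem
    have hs1 : s.1 ≤ m.1 := by
      rw [hsβ]; simp only
      intro i; simp [Finsupp.add_apply]
    have hsne : s ≠ m := hs.2
    have hs2 : s.2 = m.2 := by rw [hsβ]
    have hsS : s ∈ S := ⟨hs.1, hs2.trans hm.2.1, hs1.trans hm.2.2⟩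
    have hslt : s < m := by
      refine lt_of_le_of_ne ⟨hs1, ?_⟩ hsne
      rw [hs2]
    exact hmin s (Set.Finite.mem_toFinset hSfin |>.mpr hsS) hslt
  obtain ⟨i, hi⟩ := (hevert m).mp hmvert
  refine ⟨i, d.1 - m.1, ?_⟩
  rw [hi]
  have h1 : m.1 + (d.1 - m.1) = d.1 := by
    rw [add_comm, tsub_add_cancel_of_le hm.2.2]
  rw [h1, hm.2.1]

end Mod
section Key
open MvPowerSeries
variable {n p : ℕ}

theorem key_division {M : Submodule (MvPowerSeries (Fin n) ℝ) (ModV n p)}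
    {t : ℕ} {e : Fin t → Idx n p} {G : Fin t → ModV n p}
    (hG : ∀ i, G i ∈ M ∧ IsExpOf (G i) (e i))
    (hdiag : ∀ F : ModV n p, F ∈ M → F ≠ 0 → ∃ (i : Fin t) (β : Fin n →₀ ℕ),
      IsExpOf F ((e i).1 + β, (e i).2))
    {lam : ℕ} (hlam : ∀ i, degF (e i).1 ≤ lam) (l : ℕ)
    {F : ModV n p} (hFM : F ∈ M) (hFo : ∀ x ∈ suppV F, l + lam ≤ degF x.1) :
    F ∈ (mIdl n) ^ l • (M ⊓ ((mIdl n) ^ lam •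
      (⊤ : Submodule (MvPowerSeries (Fin n) ℝ) (ModV n p)))) := by
  classical
  by_cases hF0 : F = 0
  · rw [hF0]; exact Submodule.zero_mem _
  have hne : Nonempty (Fin t) := by
    obtain ⟨i, -, -⟩ := hdiag F hFM hF0
    exact ⟨i⟩
  -- the selection function
  have hsel0 : ∀ F' : ModV n p, ∃ z : Fin t × (Fin n →₀ ℕ) × ℝ,
      F' ∈ M → F' ≠ 0 →
        (IsExpOf F' (((e z.1).1 + z.2.1, (e z.1).2)) ∧
         (∀ x ∈ suppV (F' - monomial z.2.1 z.2.2 • G z.1),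
            idxLT ((e z.1).1 + z.2.1, (e z.1).2) x)) := by
    intro F'
    by_cases hM : F' ∈ M
    · by_cases h0 : F' = 0
      · exact ⟨⟨Classical.arbitrary _, 0, 0⟩, fun _ h => absurd h0 h⟩
      · obtain ⟨i, β, hexp⟩ := hdiag F' hM h0
        set d : Idx n p := ((e i).1 + β, (e i).2) with hd
        set c : ℝ := coeff d.1 (F' d.2) / coeff (e i).1 (G i (e i).2) with hc
        refine ⟨⟨i, β, c⟩, fun _ _ => ⟨hexp, ?_⟩⟩
        have hcd : coeff d.1 ((F' - monomial β c • G i) d.2) = 0 := by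
          rw [Pi.sub_apply, map_sub]
          have h1 : coeff d.1 ((monomial β c • G i) d.2) = coeff d.1 (F' d.2) := by
            rw [coeff_monomial_smul (x := d)]
            have hle : β ≤ d.1 := by
              show β ≤ (e i).1 + β
              exact self_le_add_left β (e i).1
            rw [if_pos hle]
            have h2 : d.1 - β = (e i).1 := by
              show (e i).1 + β - β = (e i).1
              simp
            rw [h2]
            show c * coeff (e i).1 (G i (e i).2) = _
            rw [hc, div_mul_cancel₀]
            exact (hG i).2.1
          rw [h1, sub_self]
        intro x hx
        have hxne : x ≠ d := by
          intro hxd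
          rw [hxd] at hx
          exact hx hcd
        refine idxLT_of_idxLE_ne ?_ ?_
        · -- x in supp F' or in supp of the monomial smul
          have hx' : coeff x.1 (F' x.2) ≠ 0 ∨
              coeff x.1 ((monomial β c • G i) x.2) ≠ 0 := by
            by_contra hcon
            push_neg at hcon
            apply hx
            show coeff x.1 ((F' - monomial β c • G i) x.2) = 0
            rw [Pi.sub_apply, map_sub, hcon.1, hcon.2, sub_self]
          rcases hx' with h | h
          · exact hexp.2 x h
          · exact supp_monomial_smul (hG i).2 h
        · exact fun he => hxne he.symm
    · exact ⟨⟨Classical.arbitrary _, 0, 0⟩, fun h => absurd h hM⟩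
  choose sel hsel using hsel0
  set stepF : ModV n p → ModV n p := fun F' =>
    if F' = 0 then 0 else F' - monomial (sel F').2.1 (sel F').2.2 • G (sel F').1 with hstepF
  set seq : ℕ → ModV n p := fun k => stepF^[k] F with hseqdef
  have hseq0 : seq 0 = F := rfl
  have hseq_succ : ∀ k, seq (k + 1) = stepF (seq k) := by
    intro k
    show stepF^[k+1] F = stepF (stepF^[k] F)
    rw [Function.iterate_succ_apply']
  set ik : ℕ → Fin t := fun k => (sel (seq k)).1 with hik
  set bk : ℕ → (Fin n →₀ ℕ) := fun k => (sel (seq k)).2.1 with hbk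
  set ck : ℕ → ℝ := fun k => (sel (seq k)).2.2 with hck
  set Ek : ℕ → Idx n p := fun k => ((e (ik k)).1 + bk k, (e (ik k)).2) with hEk
  set Tk : ℕ → ModV n p := fun k => seq k - seq (k + 1) with hTkdef
  have hstepz : ∀ k, seq k = 0 → seq (k + 1) = 0 := by
    intro k h
    rw [hseq_succ k, h]
    simp [hstepF]
  have hTk : ∀ k, seq k ≠ 0 → seq (k + 1) = seq k - monomial (bk k) (ck k) • G (ik k) := by
    intro k h
    rw [hseq_succ k, hstepF]
    simp only [if_neg h]
    rfl
  have hMk : ∀ k, seq k ∈ M := by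
    intro k
    induction k with
    | zero => exact hFM
    | succ k ihk =>
      by_cases h : seq k = 0
      · rw [hstepz k h]; exact Submodule.zero_mem _
      · rw [hTk k h]
        exact Submodule.sub_mem _ ihk (Submodule.smul_mem _ _ (hG _).1)
  have hexpk : ∀ k, seq k ≠ 0 → IsExpOf (seq k) (Ek k) := by
    intro k h
    exact (hsel (seq k) (hMk k) h).1
  have hsuppk : ∀ k, seq k ≠ 0 → ∀ x ∈ suppV (seq (k + 1)), idxLT (Ek k) x := by
    intro k h x hx
    refine (hsel (seq k) (hMk k) h).2 x ?_
    rwa [← hTk k h]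
  have hnz : ∀ k k', k ≤ k' → seq k' ≠ 0 → seq k ≠ 0 := by
    intro k k' hkk' h
    by_contra hc
    apply h
    clear h
    induction k' with
    | zero => rw [Nat.le_zero] at hkk'; rwa [← hkk']
    | succ k' ihk =>
      rcases Nat.lt_or_ge k (k' + 1) with hlt | hge
      · exact hstepz k' (ihk (Nat.lt_succ_iff.mp hlt))
      · have : k = k' + 1 := le_antisymm hkk' hge
        rwa [← this]
  have hordk : ∀ k, ∀ x ∈ suppV (seq k), l + lam ≤ degF x.1 := by
    intro k
    induction k with
    | zero => exact hFo
    | succ k ihk =>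
      intro x hx
      by_cases h : seq k = 0
      · exfalso
        rw [hstepz k h] at hx
        exact hx (by simp)
      · have h1 := hsuppk k h x hx
        have h2 : l + lam ≤ degF (Ek k).1 := ihk (Ek k) (hexpk k h).1
        exact h2.trans (idxLE_degF (Or.inl h1))
  have hEmono : ∀ k' k, k < k' → seq k' ≠ 0 → idxLT (Ek k) (Ek k') := by
    intro k'
    induction k' with
    | zero => intro k h; omega
    | succ k' ihk =>
      intro k hk h
      have hk'nz : seq k' ≠ 0 := hnz k' (k' + 1) (Nat.le_succ _) h
      have hstep : idxLT (Ek k') (Ek (k' + 1)) :=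
        hsuppk k' hk'nz (Ek (k' + 1)) (hexpk (k' + 1) h).1
      rcases Nat.lt_or_ge k k' with hlt | hge
      · exact idxLT_trans (ihk k hlt hk'nz) hstep
      · have : k = k' := by omega
        rwa [this]
  have hKd : ∀ d : Idx n p, ∃ K, ∀ k, K ≤ k → seq k = 0 ∨ idxLT d (Ek k) := by
    intro d
    set A := {k : ℕ | seq k ≠ 0 ∧ idxLE (Ek k) d} with hA
    have hAfin : A.Finite := by
      refine Set.Finite.of_finite_image (f := Ek) (((finite_idxLE d).subset ?_)) ?_
      · rintro x ⟨k, hk, rfl⟩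
        exact hk.2
      · intro k1 hk1 k2 hk2 hE
        rcases lt_trichotomy k1 k2 with hlt | heq | hgt
        · exact absurd (hE ▸ hEmono k2 k1 hlt hk2.1) (idxLT_irrefl _)
        · exact heq
        · exact absurd (hE ▸ hEmono k1 k2 hgt hk1.1) (idxLT_irrefl _)
    obtain ⟨b, hb⟩ := hAfin.bddAbove
    refine ⟨b + 1, ?_⟩
    intro k hk
    by_cases h0 : seq k = 0
    · exact Or.inl h0
    · by_cases hlt : idxLT d (Ek k)
      · exact Or.inr hlt
      · exfalso
        have : k ∈ A := ⟨h0, idxLE_of_not_idxLT hlt⟩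
        have := hb this
        omega
  have hvanish : ∀ (d : Idx n p) (K : ℕ), (seq K = 0 ∨ idxLT d (Ek K)) →
      coeff d.1 (seq K d.2) = 0 := by
    intro d K hK
    by_cases h0 : seq K = 0
    · rw [h0]; simp
    · rcases hK with h | h
      · exact absurd h h0
      · by_contra hc
        exact not_idxLE_of_idxLT h ((hexpk K h0).2 d hc)
  have htel : ∀ K, F = (∑ k ∈ Finset.range K, Tk k) + seq K := by
    intro K
    induction K with
    | zero => simp [hseq0]
    | succ K ihk =>
      rw [Finset.sum_range_succ]
      have hT : Tk K = seq K - seq (K + 1) := rfl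
      rw [hT, ihk]
      abel
  -- the quotients
  set Q : Fin t → MvPowerSeries (Fin n) ℝ := fun i =>
    fun β => if h : ∃ k, seq k ≠ 0 ∧ ik k = i ∧ bk k = β then ck h.choose else 0 with hQ
  have hQdef : ∀ i β, coeff β (Q i) =
      if h : ∃ k, seq k ≠ 0 ∧ ik k = i ∧ bk k = β then ck h.choose else 0 := fun _ _ => rfl
  have huniq : ∀ k1 k2, seq k1 ≠ 0 → seq k2 ≠ 0 → ik k1 = ik k2 → bk k1 = bk k2 →
      k1 = k2 := by
    intro k1 k2 h1 h2 hik hbk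
    have hEeq : Ek k1 = Ek k2 := by rw [hEk]; simp only [hik, hbk]
    rcases lt_trichotomy k1 k2 with hlt | heq | hgt
    · exact absurd (hEeq ▸ hEmono k2 k1 hlt h2) (idxLT_irrefl _)
    · exact heq
    · exact absurd (hEeq ▸ hEmono k1 k2 hgt h1) (idxLT_irrefl _)
  have hQco : ∀ k, seq k ≠ 0 → coeff (bk k) (Q (ik k)) = ck k := by
    intro k hk
    rw [hQdef]
    have hex : ∃ k', seq k' ≠ 0 ∧ ik k' = ik k ∧ bk k' = bk k := ⟨k, hk, rfl, rfl⟩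
    rw [dif_pos hex]
    have hspec := hex.choose_spec
    rw [huniq hex.choose k hspec.1 hk hspec.2.1 hspec.2.2]
  have hQzero : ∀ i β, (¬ ∃ k, seq k ≠ 0 ∧ ik k = i ∧ bk k = β) → coeff β (Q i) = 0 := by
    intro i β h
    rw [hQdef, dif_neg h]
  have hQmem : ∀ i, Q i ∈ mIdl n ^ l * mIdl n ^ (lam - degF (e i).1) := by
    intro i
    rw [← pow_add]
    apply VIdl_le_pow
    intro β hβ
    by_cases hex : ∃ k, seq k ≠ 0 ∧ ik k = i ∧ bk k = β
    · exfalso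
      obtain ⟨k, hk0, hki, hkβ⟩ := hex
      have h1 : l + lam ≤ degF (Ek k).1 := hordk k (Ek k) (hexpk k hk0).1
      have h2 : degF (Ek k).1 = degF (e i).1 + degF β := by
        rw [hEk]
        simp only
        rw [degF_add, hki, hkβ]
      have h3 := hlam i
      omega
    · exact hQzero i β hex
  -- the division identity F = ∑ i, Q i • G i
  have hFeq : F = ∑ i, Q i • G i := by
    funext j
    ext α
    set d : Idx n p := (α, j) with hd
    obtain ⟨K, hK⟩ := hKd d
    set QK : Fin t → MvPowerSeries (Fin n) ℝ := fun i =>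
      ∑ k ∈ (Finset.range K).filter (fun k => seq k ≠ 0 ∧ ik k = i),
        monomial (bk k) (ck k) with hQK
    have hQKco : ∀ i β, coeff β (QK i) =
        ∑ k ∈ (Finset.range K).filter (fun k => seq k ≠ 0 ∧ ik k = i),
          if β = bk k then ck k else 0 := by
      intro i β
      rw [hQK]
      simp only [map_sum]
      refine Finset.sum_congr rfl ?_
      intro k _
      rw [coeff_monomial]
    -- Step A
    have hstepA : ∀ (i : Fin t) (β γ : Fin n →₀ ℕ), β + γ = α →
        coeff β (Q i) * coeff γ (G i j) = coeff β (QK i) * coeff γ (G i j) := by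
      intro i β γ hβγ
      by_cases hex : ∃ k, seq k ≠ 0 ∧ ik k = i ∧ bk k = β
      · obtain ⟨k, hk0, hki, hkβ⟩ := hex
        by_cases hkK : k < K
        · -- both sides have the same coefficient
          have h1 : coeff β (Q i) = ck k := by
            rw [← hki, ← hkβ]
            exact hQco k hk0
          have h2 : coeff β (QK i) = ck k := by
            rw [hQKco]
            rw [Finset.sum_eq_single_of_mem k]
            · rw [if_pos hkβ.symm]
            · rw [Finset.mem_filter]
              exact ⟨Finset.mem_range.mpr hkK, hk0, hki⟩
            · intro k' hk' hne
              rw [Finset.mem_filter] at hk'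
              rw [if_neg]
              intro hβk'
              exact hne (huniq k' k hk'.2.1 hk0 (hk'.2.2.trans hki.symm) (hβk' ▸ hkβ).symm)
          rw [h1, h2]
        · -- k ≥ K : the G-coefficient vanishes
          have hGz : coeff γ (G i j) = 0 := by
            by_contra hc
            have hsupp : ((γ, j) : Idx n p) ∈ suppV (G i) := hc
            have h1 := idxLE_add (bk k) ((hG i).2.2 (γ, j) hsupp)
            have h2 : ((e i).1 + bk k, (e i).2) = Ek k := by
              rw [hEk]; simp only [hki]
            have h3 : γ + bk k = α := by rw [← hβγ, hkβ, add_comm]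
            rw [h2, h3] at h1
            have h4 := hK k (le_of_not_gt hkK)
            rcases h4 with h4 | h4
            · exact hk0 h4
            · exact not_idxLE_of_idxLT h4 h1
          rw [hGz, mul_zero, mul_zero]
      · rw [hQzero i β hex]
        have h2 : coeff β (QK i) = 0 := by
          rw [hQKco]
          refine Finset.sum_eq_zero ?_
          intro k hk
          rw [Finset.mem_filter] at hk
          rw [if_neg]
          intro hβk
          exact hex ⟨k, hk.2.1, hk.2.2, hβk.symm⟩
        rw [h2]
    -- Step B
    have hstepB : ∀ i : Fin t, coeff α ((Q i • G i) j) = coeff α ((QK i • G i) j) := by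
      intro i
      rw [Pi.smul_apply, Pi.smul_apply, smul_eq_mul, smul_eq_mul, coeff_mul, coeff_mul]
      refine Finset.sum_congr rfl ?_
      rintro ⟨β, γ⟩ hmem
      exact hstepA i β γ (Finset.HasAntidiagonal.mem_antidiagonal.mp hmem)
    -- Step C
    have hstepC : ∑ i, QK i • G i = ∑ k ∈ Finset.range K, Tk k := by
      have h1 : ∀ i : Fin t, QK i • G i =
          ∑ k ∈ (Finset.range K).filter (fun k => seq k ≠ 0 ∧ ik k = i),
            monomial (bk k) (ck k) • G (ik k) := by
        intro i
        rw [hQK, Finset.sum_smul]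
        refine Finset.sum_congr rfl ?_
        intro k hk
        rw [Finset.mem_filter] at hk
        rw [hk.2.2]
      simp only [h1]
      have h2 : ∀ k ∈ Finset.range K, seq k ≠ 0 →
          Tk k = monomial (bk k) (ck k) • G (ik k) := by
        intro k _ hk0
        show seq k - seq (k + 1) = _
        rw [hTk k hk0]
        abel
      calc ∑ i, ∑ k ∈ (Finset.range K).filter (fun k => seq k ≠ 0 ∧ ik k = i),
              monomial (bk k) (ck k) • G (ik k)
          = ∑ i, ∑ k ∈ ((Finset.range K).filter (fun k => seq k ≠ 0)).filter
              (fun k => ik k = i), monomial (bk k) (ck k) • G (ik k) := by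
            refine Finset.sum_congr rfl ?_
            intro i _
            rw [Finset.filter_filter]
        _ = ∑ k ∈ (Finset.range K).filter (fun k => seq k ≠ 0),
              monomial (bk k) (ck k) • G (ik k) :=
            Finset.sum_fiberwise_of_maps_to (fun x _ => Finset.mem_univ _) _
        _ = ∑ k ∈ Finset.range K, Tk k := by
            rw [Finset.sum_filter]
            refine Finset.sum_congr rfl ?_
            intro k hk
            by_cases h0 : seq k = 0
            · rw [if_neg (by simpa using h0)]
              show (0 : ModV n p) = seq k - seq (k + 1)
              rw [h0, hstepz k h0]
              simp
            · rw [if_pos h0, ← h2 k hk h0]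
    calc coeff α (F j) = coeff α (((∑ k ∈ Finset.range K, Tk k) + seq K) j) := by
          rw [← htel K]
      _ = coeff α ((∑ k ∈ Finset.range K, Tk k) j) := by
          rw [Pi.add_apply, map_add, hvanish d K (hK K le_rfl), add_zero]
      _ = coeff α ((∑ i, QK i • G i) j) := by rw [hstepC]
      _ = ∑ i, coeff α ((QK i • G i) j) := by
          rw [Finset.sum_apply, map_sum]
      _ = ∑ i, coeff α ((Q i • G i) j) := by
          exact (Finset.sum_congr rfl (fun i _ => (hstepB i).symm))
      _ = coeff α ((∑ i, Q i • G i) j) := by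
          rw [Finset.sum_apply, map_sum]
  -- conclusion
  rw [hFeq]
  refine Submodule.sum_mem _ ?_
  intro i _
  refine Submodule.mul_induction_on (hQmem i) ?_ ?_
  · intro a ha b hb
    rw [mul_smul]
    refine Submodule.smul_mem_smul ha ?_
    refine Submodule.mem_inf.mpr ⟨Submodule.smul_mem _ _ (hG i).1, ?_⟩
    rw [mem_smul_top_iff]
    intro j
    rw [Pi.smul_apply, smul_eq_mul]
    have hGj : G i j ∈ mIdl n ^ (degF (e i).1) := by
      apply VIdl_le_pow
      intro δ hδ
      by_contra hc
      have hsupp : ((δ, j) : Idx n p) ∈ suppV (G i) := hc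
      have h5 : degF (e i).1 ≤ degF δ := idxLE_degF ((hG i).2.2 (δ, j) hsupp)
      omega
    have hmul := Ideal.mul_mem_mul hb hGj
    rw [← pow_add] at hmul
    have harith : lam - degF (e i).1 + degF (e i).1 = lam := by
      have := hlam i; omega
    rwa [harith] at hmul
  · intro x y hx hy
    rw [add_smul]
    exact Submodule.add_mem _ hx hy

end Key

/-- **Artin–Rees lemma via the diagram of initial exponents.** -/
theorem stmt7 {n p q t : ℕ} (Acols : Fin q → (Fin p → MvPowerSeries (Fin n) ℝ))
    (e : Fin t → Idx n p) (heinj : Function.Injective e)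
    (hevert : ∀ d : Idx n p,
      IsVertex (diagramOf (Submodule.span (MvPowerSeries (Fin n) ℝ) (Set.range Acols))) d ↔
        ∃ i, e i = d)
    (lam : ℕ) (hlam : lam = Finset.univ.sup fun i => degF (e i).1) :
    ∀ l : ℕ,
      Submodule.span (MvPowerSeries (Fin n) ℝ) (Set.range Acols) ⊓
        ((Ideal.span (Set.range (MvPowerSeries.X : Fin n → MvPowerSeries (Fin n) ℝ)))
            ^ (l + lam) •
          (⊤ : Submodule (MvPowerSeries (Fin n) ℝ) (Fin p → MvPowerSeries (Fin n) ℝ))) =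
      (Ideal.span (Set.range (MvPowerSeries.X : Fin n → MvPowerSeries (Fin n) ℝ))) ^ l •
        (Submodule.span (MvPowerSeries (Fin n) ℝ) (Set.range Acols) ⊓
          ((Ideal.span (Set.range (MvPowerSeries.X : Fin n → MvPowerSeries (Fin n) ℝ))) ^ lam •
            (⊤ : Submodule (MvPowerSeries (Fin n) ℝ)
              (Fin p → MvPowerSeries (Fin n) ℝ)))) := by
  intro l
  classical
  set M := Submodule.span (MvPowerSeries (Fin n) ℝ) (Set.range Acols) with hM
  show M ⊓ (mIdl n ^ (l + lam) • ⊤) = mIdl n ^ l • (M ⊓ (mIdl n ^ lam • ⊤))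
  have hGex : ∀ i : Fin t, ∃ Gi : ModV n p, Gi ∈ M ∧ Gi ≠ 0 ∧ IsExpOf Gi (e i) := by
    intro i
    have hv : IsVertex (diagramOf M) (e i) := (hevert (e i)).mpr ⟨i, rfl⟩
    obtain ⟨F, h1, h2, h3⟩ := vertex_mem_diagram hv
    exact ⟨F, h1, h2, h3⟩
  choose G hG1 hG2 hG3 using hGex
  have hG : ∀ i, G i ∈ M ∧ IsExpOf (G i) (e i) := fun i => ⟨hG1 i, hG3 i⟩
  have hdiag : ∀ F : ModV n p, F ∈ M → F ≠ 0 →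
      ∃ (i : Fin t) (β : Fin n →₀ ℕ), IsExpOf F ((e i).1 + β, (e i).2) := by
    intro F hFM hF0
    obtain ⟨d, hd⟩ := exists_isExpOf hF0
    have hdmem : d ∈ diagramOf M := ⟨F, hFM, hF0, hd⟩
    obtain ⟨i, β, hdi⟩ := mem_shift_vertex hevert hdmem
    rw [hdi] at hd
    exact ⟨i, β, hd⟩
  have hlam' : ∀ i, degF (e i).1 ≤ lam := by
    intro i; rw [hlam]; exact Finset.le_sup (f := fun i => degF (e i).1) (Finset.mem_univ i)
  apply le_antisymm
  · rintro F ⟨h1, h2⟩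
    refine key_division hG hdiag hlam' l h1 ?_
    intro x hx
    by_contra hc
    push_neg at hc
    have h3 : F x.2 ∈ mIdl n ^ (l + lam) := (mem_smul_top_iff _ F).mp h2 x.2
    exact hx (mem_mIdl_pow_iff.mp h3 x.1 hc)
  · refine le_inf ?_ ?_
    · calc mIdl n ^ l • (M ⊓ (mIdl n ^ lam • ⊤)) ≤ mIdl n ^ l • M :=
            smul_mono_right _ inf_le_left
        _ ≤ M := Submodule.smul_le_right
    · refine le_trans (smul_mono_right _ inf_le_right) (le_of_eq ?_)
      rw [pow_add, ← Ideal.smul_eq_mul, Submodule.smul_assoc]
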